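/- Lower bound via concentration: suppose c ∈ ℝ, a₁, λ, C₃, β, K₁ > 0, and nonnegative reals I_b := ∫_{ℝ^N} b|u|^{t(x)} dx and I_ρ := ∫_{ℝ^N} ρ|u|^{r(x)} dx satisfy c ≥ a₁ I_b − (λC₃/β) I_ρ + K₁, together with the weighted Hölder bound I_ρ ≤ 2 ‖ρ b^{-1}‖_{L^{l'(·)}(b)} ‖|u|^{r(·)}‖_{L^{l(·)}(b)} where l(·) = t(·)/r(·) with 1 < l⁻ ≤ l⁺ < ∞, and the modular–norm bound I_b ≥ min{‖|u|^{r(·)}‖_{L^{l(·)}(b)}^{l⁻}, ‖|u|^{r(·)}‖_{L^{l(·)}(b)}^{l⁺}}. Then c ≥ K₁ − K₂ max{λ^{l⁺/(l⁺−1)}, λ^{l⁻/(l⁻−1)}}, where K₂ = max_{*∈{+,−}} [(l^*)^{−1/(l^*−1)} − (l^*)^{−l^*/(l^*−1)}] a₁^{−1/(l^*−1)} b₁^{l^*/(l^*−1)} with b₁ = (2C₃/β)‖ρ b^{-1}‖_{L^{l'(·)}(b)}. -/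

import Mathlib

open Real

/-- One-variable minimization via Young's inequality: for `l > 1`, `a > 0`,
`d, ξ ≥ 0`, `a ξ^l - d ξ` is bounded below by the explicit minimum value. -/
lemma young_min {l a d ξ : ℝ} (hl : 1 < l) (ha : 0 < a) (hd : 0 ≤ d) (hξ : 0 ≤ ξ) :
    d * ξ - (l ^ (-1/(l-1)) - l ^ (-l/(l-1))) * a ^ (-1/(l-1)) * d ^ (l/(l-1))
      ≤ a * ξ ^ l := by
  have hl0 : (0:ℝ) < l := lt_trans one_pos hl
  have hl1 : (0:ℝ) < l - 1 := by linarith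
  set q := l / (l - 1) with hq
  have hq0 : 0 < q := by positivity
  have hpq : l.HolderConjugate q := Real.HolderConjugate.conjExponent hl
  have hla : (0:ℝ) < l * a := by positivity
  set E : ℝ := (l * a) ^ (l⁻¹) with hE
  have hE0 : 0 < E := rpow_pos_of_pos hla _
  have hY := Real.young_inequality_of_nonneg (a := E * ξ) (b := d * E⁻¹)
    (by positivity) (by positivity) hpq
  have h1 : (E * ξ) * (d * E⁻¹) = d * ξ := by field_simp
  have hEl : E ^ l = l * a := by
    rw [hE, ← rpow_mul hla.le, inv_mul_cancel₀ hl0.ne', rpow_one]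
  have hEinv : E⁻¹ ^ q = (l*a) ^ (-1/(l-1)) := by
    rw [hE, ← rpow_neg hla.le, ← rpow_mul hla.le]
    congr 1
    rw [hq]; field_simp
  have key : (E * ξ) ^ l / l = a * ξ ^ l := by
    rw [mul_rpow hE0.le hξ, hEl]; field_simp
  have h3 : l ^ (-l/(l-1)) = l ^ ((-1:ℝ)/(l-1)) / l := by
    rw [show (-l/(l-1)) = -1/(l-1) - 1 by field_simp; ring, rpow_sub hl0, rpow_one]
  have key2 : (d * E⁻¹) ^ q / q
      = (l ^ (-1/(l-1)) - l ^ (-l/(l-1))) * a ^ (-1/(l-1)) * d ^ q := by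
    rw [mul_rpow hd (inv_nonneg.mpr hE0.le), hEinv, mul_rpow hl0.le ha.le, h3, hq]
    field_simp
  rw [h1, key, key2] at hY
  linarith

/-- The explicit minimum-value constant is nonnegative. -/
lemma young_const_nonneg {l a b : ℝ} (hl : 1 < l) (ha : 0 < a) (hb : 0 ≤ b) :
    0 ≤ (l ^ (-1/(l-1)) - l ^ (-l/(l-1))) * a ^ (-1/(l-1)) * b ^ (l/(l-1)) := by
  have hl1 : (0:ℝ) < l - 1 := by linarith
  have hexp : -l/(l-1) ≤ -1/(l-1) := by
    rw [div_le_div_iff_of_pos_right hl1]; linarith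
  have hcoef : l ^ (-l/(l-1)) ≤ l ^ (-1/(l-1)) :=
    rpow_le_rpow_of_exponent_le hl.le hexp
  exact mul_nonneg (mul_nonneg (by linarith) (rpow_nonneg ha.le _)) (rpow_nonneg hb _)

/-- lower bound for the critical level via concentration. -/
theorem stmt15 (c a₁ lam C₃ β K₁ : ℝ) (ha₁ : 0 < a₁) (hlam : 0 < lam)
    (hC₃ : 0 < C₃) (hβ : 0 < β) (hK₁ : 0 < K₁)
    (Ib Iρ ξ w : ℝ) (hIb : 0 ≤ Ib) (hIρ : 0 ≤ Iρ) (hξ : 0 ≤ ξ) (hw : 0 ≤ w)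
    (lm lM : ℝ) (hlm : 1 < lm) (hlmM : lm ≤ lM)
    (hmain : a₁ * Ib - lam * C₃ / β * Iρ + K₁ ≤ c)
    (hhold : Iρ ≤ 2 * w * ξ)
    (hmod : min (ξ ^ lm) (ξ ^ lM) ≤ Ib) :
    K₁ -
        max ((lM ^ (-1 / (lM - 1)) - lM ^ (-lM / (lM - 1))) * a₁ ^ (-1 / (lM - 1)) *
              (2 * C₃ / β * w) ^ (lM / (lM - 1)))
          ((lm ^ (-1 / (lm - 1)) - lm ^ (-lm / (lm - 1))) * a₁ ^ (-1 / (lm - 1)) *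
              (2 * C₃ / β * w) ^ (lm / (lm - 1))) *
          max (lam ^ (lM / (lM - 1))) (lam ^ (lm / (lm - 1))) ≤ c := by
  have hlM : 1 < lM := lt_of_lt_of_le hlm hlmM
  set b₁ : ℝ := 2 * C₃ / β * w with hb₁def
  have hb₁ : 0 ≤ b₁ := by positivity
  have hd : 0 ≤ lam * b₁ := mul_nonneg hlam.le hb₁
  set KM : ℝ := (lM ^ (-1 / (lM - 1)) - lM ^ (-lM / (lM - 1))) * a₁ ^ (-1 / (lM - 1)) *
      b₁ ^ (lM / (lM - 1)) with hKMdef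
  set Km : ℝ := (lm ^ (-1 / (lm - 1)) - lm ^ (-lm / (lm - 1))) * a₁ ^ (-1 / (lm - 1)) *
      b₁ ^ (lm / (lm - 1)) with hKmdef
  have hKM0 : 0 ≤ KM := young_const_nonneg hlM ha₁ hb₁
  have hKm0 : 0 ≤ Km := young_const_nonneg hlm ha₁ hb₁
  have hK₂0 : 0 ≤ max KM Km := le_trans hKM0 (le_max_left _ _)
  -- bound on the Iρ term
  have hIρle : lam * C₃ / β * Iρ ≤ lam * b₁ * ξ := by
    have h := mul_le_mul_of_nonneg_left hhold (by positivity : (0:ℝ) ≤ lam * C₃ / β)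
    calc lam * C₃ / β * Iρ ≤ lam * C₃ / β * (2 * w * ξ) := h
      _ = lam * b₁ * ξ := by rw [hb₁def]; ring
  -- the key lower bound for a₁ * Ib - lam * b₁ * ξ
  have hkey : -(max KM Km * max (lam ^ (lM / (lM - 1))) (lam ^ (lm / (lm - 1))))
      ≤ a₁ * Ib - lam * b₁ * ξ := by
    rcases le_or_gt 1 ξ with hξ1 | hξ1
    · -- ξ ≥ 1 : the min is ξ ^ lm
      have hmin : ξ ^ lm ≤ Ib := by
        have h' : ξ ^ lm ≤ ξ ^ lM := rpow_le_rpow_of_exponent_le hξ1 hlmM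
        rwa [min_eq_left h'] at hmod
      have hy := young_min (d := lam * b₁) (ξ := ξ) hlm ha₁ hd hξ
      rw [mul_rpow hlam.le hb₁] at hy
      have heq : (lm ^ (-1/(lm-1)) - lm ^ (-lm/(lm-1))) * a₁ ^ (-1/(lm-1)) *
          (lam ^ (lm/(lm-1)) * b₁ ^ (lm/(lm-1))) = Km * lam ^ (lm/(lm-1)) := by
        rw [hKmdef]; ring
      rw [heq] at hy
      have hIb' : a₁ * ξ ^ lm ≤ a₁ * Ib := mul_le_mul_of_nonneg_left hmin ha₁.le
      have hle2 : Km * lam ^ (lm/(lm-1))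
          ≤ max KM Km * max (lam ^ (lM / (lM - 1))) (lam ^ (lm / (lm - 1))) :=
        mul_le_mul (le_max_right _ _) (le_max_right _ _) (rpow_nonneg hlam.le _) hK₂0
      linarith
    · -- ξ < 1 : the min is ξ ^ lM
      have hmin : ξ ^ lM ≤ Ib := by
        rcases eq_or_lt_of_le hξ with h0 | h0
        · rw [← h0, zero_rpow (by positivity : lM ≠ 0)]; exact hIb
        · have h' : ξ ^ lM ≤ ξ ^ lm :=
            rpow_le_rpow_of_exponent_ge h0 hξ1.le hlmM
          rwa [min_eq_right h'] at hmod
      have hy := young_min (d := lam * b₁) (ξ := ξ) hlM ha₁ hd hξ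
      rw [mul_rpow hlam.le hb₁] at hy
      have heq : (lM ^ (-1/(lM-1)) - lM ^ (-lM/(lM-1))) * a₁ ^ (-1/(lM-1)) *
          (lam ^ (lM/(lM-1)) * b₁ ^ (lM/(lM-1))) = KM * lam ^ (lM/(lM-1)) := by
        rw [hKMdef]; ring
      rw [heq] at hy
      have hIb' : a₁ * ξ ^ lM ≤ a₁ * Ib := mul_le_mul_of_nonneg_left hmin ha₁.le
      have hle2 : KM * lam ^ (lM/(lM-1))
          ≤ max KM Km * max (lam ^ (lM / (lM - 1))) (lam ^ (lm / (lm - 1))) :=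
        mul_le_mul (le_max_left _ _) (le_max_left _ _) (rpow_nonneg hlam.le _) hK₂0
      linarith
  linarith
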